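/- Let s : [0,1] → ℝ be differentiable with s(0) = 0, s' continuous on [0,1], and s(h) = ∫₀ʰ s'(u) du. Suppose that either (i) s' is non-negative, non-increasing, and convex on [0,1], or (ii) s' is non-positive, non-decreasing, and concave on [0,1]. Then for every h ∈ [0,1]: (1/2)(s'(h) − s'(0))(s'(0) + s'(h)) ≤ (s'(h) − s'(0)) s(h). -/

import Mathlib

/-- Trapezoid bound: a convex continuous function on `[0,h]` has integral at most
the trapezoid value `h * (f 0 + f h) / 2`. -/
lemma iwa_trapezoid_bound (f : ℝ → ℝ) (h : ℝ) (h0 : 0 < h)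
    (hc : ContinuousOn f (Set.Icc 0 h)) (hcv : ConvexOn ℝ (Set.Icc 0 h) f) :
    ∫ u in (0 : ℝ)..h, f u ≤ h * (f 0 + f h) / 2 := by
  have hne : h ≠ 0 := ne_of_gt h0
  have hbound : ∀ u ∈ Set.Icc (0 : ℝ) h, f u ≤ f 0 + (f h - f 0) / h * u := by
    intro u hu
    have h1 : (1 - u / h) • (0 : ℝ) + (u / h) • h = u := by
      rw [smul_eq_mul, smul_eq_mul]
      field_simp
      ring
    have ht1 : (0:ℝ) ≤ 1 - u / h := by
      have : u / h ≤ 1 := (div_le_one h0).2 hu.2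
      linarith
    have ht2 : (0:ℝ) ≤ u / h := div_nonneg hu.1 h0.le
    have ht3 : (1 - u / h) + u / h = 1 := by ring
    have h2 := hcv.2 (Set.left_mem_Icc.2 h0.le) (Set.right_mem_Icc.2 h0.le) ht1 ht2 ht3
    rw [h1] at h2
    have h3 : (1 - u / h) • f 0 + (u / h) • f h = f 0 + (f h - f 0) / h * u := by
      simp [smul_eq_mul]; field_simp; ring
    calc f u ≤ (1 - u / h) • f 0 + (u / h) • f h := h2
      _ = f 0 + (f h - f 0) / h * u := h3
  have hi1 : IntervalIntegrable f MeasureTheory.volume 0 h :=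
    (hc.mono (by rw [Set.uIcc_of_le h0.le])).intervalIntegrable
  have hi2 : IntervalIntegrable (fun u => f 0 + (f h - f 0) / h * u)
      MeasureTheory.volume 0 h := by
    apply Continuous.intervalIntegrable; continuity
  have hmono := intervalIntegral.integral_mono_on h0.le hi1 hi2 hbound
  have hcomp : (∫ u in (0 : ℝ)..h, (f 0 + (f h - f 0) / h * u))
      = h * (f 0 + f h) / 2 := by
    rw [intervalIntegral.integral_add (intervalIntegrable_const)
      (by apply Continuous.intervalIntegrable; continuity)]
    rw [intervalIntegral.integral_const, intervalIntegral.integral_const_mul,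
      integral_id]
    field_simp
    ring
  linarith [hmono, hcomp.le, hcomp.ge]

theorem iwa_core_scalar_inequality
    (s s1 : ℝ → ℝ) (hs0 : s 0 = 0)
    (hderiv : ∀ h ∈ Set.Icc (0 : ℝ) 1, HasDerivAt s (s1 h) h)
    (hcont : ContinuousOn s1 (Set.Icc 0 1))
    (hint : ∀ h ∈ Set.Icc (0 : ℝ) 1, s h = ∫ u in (0 : ℝ)..h, s1 u)
    (hcase :
      ((∀ u ∈ Set.Icc (0 : ℝ) 1, 0 ≤ s1 u) ∧ AntitoneOn s1 (Set.Icc 0 1)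
        ∧ ConvexOn ℝ (Set.Icc 0 1) s1)
      ∨ ((∀ u ∈ Set.Icc (0 : ℝ) 1, s1 u ≤ 0) ∧ MonotoneOn s1 (Set.Icc 0 1)
        ∧ ConcaveOn ℝ (Set.Icc 0 1) s1)) :
    ∀ h ∈ Set.Icc (0 : ℝ) 1,
      1 / 2 * (s1 h - s1 0) * (s1 0 + s1 h) ≤ (s1 h - s1 0) * s h := by
  intro h hh
  rcases eq_or_lt_of_le hh.1 with h0 | h0
  · simp [← h0, hs0]
  have hsub : Set.Icc (0:ℝ) h ⊆ Set.Icc (0:ℝ) 1 := Set.Icc_subset_Icc le_rfl hh.2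
  have hcsub : ContinuousOn s1 (Set.Icc 0 h) := hcont.mono hsub
  have h01 : (0:ℝ) ∈ Set.Icc (0:ℝ) 1 := by constructor <;> norm_num
  rcases hcase with ⟨hpos, hanti, hcv⟩ | ⟨hneg, hmono, hcc⟩
  · -- s1 ≥ 0, antitone, convex: A := s1 h - s1 0 ≤ 0
    have hA : s1 h - s1 0 ≤ 0 := sub_nonpos.2 (hanti h01 hh hh.1)
    have htrap := iwa_trapezoid_bound s1 h h0 hcsub (hcv.subset hsub (convex_Icc 0 h))
    have hM : 0 ≤ s1 0 + s1 h := add_nonneg (hpos 0 h01) (hpos h hh)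
    have hsh : s h ≤ (s1 0 + s1 h) / 2 := by
      rw [hint h hh]
      nlinarith [hh.2]
    nlinarith
  · -- s1 ≤ 0, monotone, concave: A ≥ 0
    have hA : 0 ≤ s1 h - s1 0 := sub_nonneg.2 (hmono h01 hh hh.1)
    have htrap := iwa_trapezoid_bound (fun u => -s1 u) h h0 hcsub.neg
      ((hcc.subset hsub (convex_Icc 0 h)).neg)
    have hM : s1 0 + s1 h ≤ 0 := add_nonpos (hneg 0 h01) (hneg h hh)
    have hnegint : (∫ u in (0:ℝ)..h, -s1 u) = - ∫ u in (0:ℝ)..h, s1 u :=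
      intervalIntegral.integral_neg
    rw [hnegint] at htrap
    have hsh : (s1 0 + s1 h) / 2 ≤ s h := by
      rw [hint h hh]
      nlinarith [hh.2]
    nlinarith
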